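/- If T1 and T2 are q-commuting contractions on a Hilbert space H and T = T1T2, then for every h ∈ H, ‖D_{T1} T2 h‖² + ‖D_{T2} h‖² = ‖D_T h‖². In particular the map Λ sending D_T h to (D_{T1} T2 h, D_{T2} h) extends to an isometry from the closure of the range of D_T into D_{T1}-defect space ⊕ D_{T2}-defect space. -/

import Mathlib

open ContinuousLinearMap

open scoped InnerProductSpace in
lemma defect_norm_sq_aux {H : Type*} [NormedAddCommGroup H] [InnerProductSpace ℂ H]
    [CompleteSpace H] (S P : H →L[ℂ] H) (hP : IsSelfAdjoint P)
    (hsq : P * P = 1 - ContinuousLinearMap.adjoint S * S) (x : H) :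
    ‖P x‖ ^ 2 = ‖x‖ ^ 2 - ‖S x‖ ^ 2 := by
  have hadj : ContinuousLinearMap.adjoint P = P := by
    rw [← ContinuousLinearMap.star_eq_adjoint]; exact hP
  have happ : P (P x) = x - ContinuousLinearMap.adjoint S (S x) := by
    have := congrArg (fun A : H →L[ℂ] H => A x) hsq
    exact this
  have h1 : (⟪P x, P x⟫_ℂ) = ⟪x, x⟫_ℂ - ⟪S x, S x⟫_ℂ := by
    calc ⟪P x, P x⟫_ℂ = ⟪x, ContinuousLinearMap.adjoint P (P x)⟫_ℂ :=
          (ContinuousLinearMap.adjoint_inner_right P x (P x)).symm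
      _ = ⟪x, x - ContinuousLinearMap.adjoint S (S x)⟫_ℂ := by rw [hadj, happ]
      _ = ⟪x, x⟫_ℂ - ⟪x, ContinuousLinearMap.adjoint S (S x)⟫_ℂ := inner_sub_right _ _ _
      _ = ⟪x, x⟫_ℂ - ⟪S x, S x⟫_ℂ := by
          rw [ContinuousLinearMap.adjoint_inner_right]
  rw [inner_self_eq_norm_sq_to_K, inner_self_eq_norm_sq_to_K, inner_self_eq_norm_sq_to_K] at h1
  exact_mod_cast h1

/-- For `q`-commuting contractions `T1, T2` with `T = T1 T2`:
`‖D_{T1} T2 h‖² + ‖D_{T2} h‖² = ‖D_T h‖²` for every `h`, and the map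
`Λ : D_T h ↦ (D_{T1} T2 h, D_{T2} h)` extends to a (linear) isometry from the closure of
the range of `D_T` into `D_{T1}`-space ⊕ `D_{T2}`-space (the ℓ²-direct sum `H ⊕₂ H`). -/
theorem defect_lambda_isometry
    {H : Type*} [NormedAddCommGroup H] [InnerProductSpace ℂ H] [CompleteSpace H]
    (q : ℂ) (hq : ‖q‖ = 1)
    (T1 T2 : H →L[ℂ] H) (hT1 : ‖T1‖ ≤ 1) (hT2 : ‖T2‖ ≤ 1)
    (hcomm : T1 * T2 = q • (T2 * T1))
    (DT DT1 DT2 : H →L[ℂ] H)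
    (hDT : DT.IsPositive) (hDT1 : DT1.IsPositive) (hDT2 : DT2.IsPositive)
    (hDTsq : DT * DT = 1 - adjoint (T1 * T2) * (T1 * T2))
    (hDT1sq : DT1 * DT1 = 1 - adjoint T1 * T1)
    (hDT2sq : DT2 * DT2 = 1 - adjoint T2 * T2) :
    (∀ h : H, ‖DT1 (T2 h)‖ ^ 2 + ‖DT2 h‖ ^ 2 = ‖DT h‖ ^ 2) ∧
    ∃ Λ : (LinearMap.range (DT : H →ₗ[ℂ] H)).topologicalClosure →ₗᵢ[ℂ] WithLp 2 (H × H),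
      ∀ (h : H) (x : (LinearMap.range (DT : H →ₗ[ℂ] H)).topologicalClosure),
        (x : H) = DT h →
        Λ x = (WithLp.equiv 2 (H × H)).symm (DT1 (T2 h), DT2 h) := by
  have key : ∀ h : H, ‖DT1 (T2 h)‖ ^ 2 + ‖DT2 h‖ ^ 2 = ‖DT h‖ ^ 2 := by
    intro h
    have e1 := defect_norm_sq_aux T1 DT1 hDT1.isSelfAdjoint hDT1sq (T2 h)
    have e2 := defect_norm_sq_aux T2 DT2 hDT2.isSelfAdjoint hDT2sq h
    have e3 := defect_norm_sq_aux (T1 * T2) DT hDT.isSelfAdjoint hDTsq h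
    have e4 : (T1 * T2) h = T1 (T2 h) := rfl
    rw [e4] at e3
    rw [e1, e2, e3]; ring
  refine ⟨key, ?_⟩
  -- the target space
  set W := WithLp 2 (H × H)
  -- the map `h ↦ (D_{T1} T2 h, D_{T2} h)` as a continuous linear map into `W`
  let L : H →L[ℂ] W :=
    { toLinearMap := (WithLp.linearEquiv 2 ℂ (H × H)).symm.toLinearMap ∘ₗ
        (((DT1.comp T2).prod DT2) : H →L[ℂ] H × H).toLinearMap
      cont := by
        exact ((WithLp.prodContinuousLinearEquiv 2 ℂ H H).symm.continuous).comp
          ((DT1.comp T2).prod DT2).continuous }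
  have hLfst : ∀ h : H, (L h).fst = DT1 (T2 h) := fun _ => rfl
  have hLsnd : ∀ h : H, (L h).snd = DT2 h := fun _ => rfl
  have hLnorm : ∀ h : H, ‖L h‖ = ‖DT h‖ := by
    intro h
    have hsq : ‖L h‖ ^ 2 = ‖DT h‖ ^ 2 := by
      rw [WithLp.prod_norm_sq_eq_of_L2, hLfst, hLsnd, key h]
    calc ‖L h‖ = Real.sqrt (‖L h‖ ^ 2) := (Real.sqrt_sq (norm_nonneg _)).symm
      _ = Real.sqrt (‖DT h‖ ^ 2) := by rw [hsq]
      _ = ‖DT h‖ := Real.sqrt_sq (norm_nonneg _)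
  set S := LinearMap.range (DT : H →ₗ[ℂ] H) with hS
  set C := S.topologicalClosure with hC
  have hker : LinearMap.ker (DT : H →ₗ[ℂ] H) ≤ LinearMap.ker (L : H →ₗ[ℂ] W) := by
    intro h hh
    have h0 : DT h = 0 := hh
    have : ‖L h‖ = 0 := by rw [hLnorm, h0, norm_zero]
    have hL0 : L h = 0 := norm_eq_zero.mp this
    simp only [LinearMap.mem_ker, ContinuousLinearMap.coe_coe]
    exact hL0
  -- the map on `S` itself
  let e1 := LinearMap.quotKerEquivRange (DT : H →ₗ[ℂ] H)
  let g := (LinearMap.ker (DT : H →ₗ[ℂ] H)).liftQ (L : H →ₗ[ℂ] W) hker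
  let f₀ : S →ₗ[ℂ] W := g ∘ₗ (e1.symm : S →ₗ[ℂ] H ⧸ LinearMap.ker (DT : H →ₗ[ℂ] H))
  have hf₀ : ∀ (h : H) (hm : DT h ∈ S), f₀ ⟨DT h, hm⟩ = L h := by
    intro h hm
    have he : e1 (Submodule.Quotient.mk h) = ⟨DT h, hm⟩ := by
      apply Subtype.ext
      simp [e1, LinearMap.quotKerEquivRange]
    have : f₀ (e1 (Submodule.Quotient.mk h)) = L h := by
      simp [f₀, g, Submodule.liftQ_apply]
    rwa [he] at this
  have hf₀norm : ∀ x : S, ‖f₀ x‖ = ‖x‖ := by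
    rintro ⟨x, hx⟩
    obtain ⟨h, rfl⟩ := hx
    have hm : DT h ∈ S := ⟨h, rfl⟩
    show ‖f₀ ⟨DT h, hm⟩‖ = ‖DT h‖
    rw [hf₀ h hm, hLnorm]
  let f₀i : S →ₗᵢ[ℂ] W := ⟨f₀, hf₀norm⟩
  -- the inclusion `S → C`
  let einc : S →ₗ[ℂ] C := Submodule.inclusion (Submodule.le_topologicalClosure S)
  have hencn : ∀ x : S, ‖einc x‖ = ‖x‖ := fun _ => rfl
  have hiso : Isometry einc := AddMonoidHomClass.isometry_of_norm einc hencn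
  let eL : S →L[ℂ] C := ⟨einc, hiso.continuous⟩
  have h_e : IsUniformInducing eL := hiso.isUniformInducing
  have h_dense : DenseRange eL := by
    refine Topology.IsInducing.subtypeVal.dense_iff.2 fun x => ?_
    have hx : (x : H) ∈ closure (S : Set H) := x.prop
    have himg : Subtype.val '' Set.range ⇑eL = (S : Set H) := by
      ext y
      constructor
      · rintro ⟨z, ⟨w, rfl⟩, rfl⟩
        exact w.prop
      · intro hy
        exact ⟨eL ⟨y, hy⟩, ⟨⟨y, hy⟩, rfl⟩, rfl⟩
    exact himg.symm ▸ hx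
  -- extend
  let F : C →L[ℂ] W := (f₀i.toContinuousLinearMap).extend eL
  have hFe : ∀ x : S, F (eL x) = f₀ x := by
    intro x
    have := ContinuousLinearMap.extend_eq (f := f₀i.toContinuousLinearMap) (e := eL) h_dense h_e x
    exact this
  have hFnorm : ∀ x : C, ‖F x‖ = ‖x‖ := by
    have : IsClosed {x : C | ‖F x‖ = ‖x‖} :=
      isClosed_eq (F.continuous.norm) continuous_subtype_val.norm
    intro x
    refine h_dense.induction_on x this fun y => ?_
    rw [hFe y]
    exact (hf₀norm y).trans (hencn y).symm
  refine ⟨⟨F.toLinearMap, hFnorm⟩, ?_⟩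
  intro h x hx
  have hm : DT h ∈ S := ⟨h, rfl⟩
  have hxe : x = eL ⟨DT h, hm⟩ := by
    apply Subtype.ext
    exact hx
  show F x = _
  rw [hxe, hFe, hf₀ h hm]
  rfl
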